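/- Let ℓ ≥ 0 and s ≥ 0 with ℓ + s > 0, and let u₀ ∈ L²(ℝ³) satisfy ‖∇^ℓ u₀‖_{L²} < ∞ and ‖Λ^{-s} u₀‖_{L²} < ∞. Let u(t) = e^{tΔ} u₀. Then there exists a constant C₀ depending only on ‖∇^ℓ u₀‖_{L²}, ‖Λ^{-s} u₀‖_{L²}, ℓ and s such that for all t ≥ 0: ‖∇^ℓ u(t)‖_{L²}² ≤ C₀ (1+t)^{-(ℓ+s)}. -/

import Mathlib

open MeasureTheory
open scoped FourierTransform

private lemma rpow_mul_exp_neg_le (m : ℝ) (hm : 0 < m) :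
    ∃ K : ℝ, 1 ≤ K ∧ ∀ y : ℝ, 0 ≤ y → y ^ m * Real.exp (-y) ≤ K := by
  set n : ℕ := ⌈m⌉₊
  have hfac1 : (1:ℝ) ≤ n.factorial := by exact_mod_cast n.factorial_pos
  refine ⟨(n.factorial : ℝ) + 1, by linarith, fun y hy => ?_⟩
  have hyn : y ^ m ≤ y ^ n + 1 := by
    rcases le_total y 1 with h1 | h1
    · have : y ^ m ≤ 1 := Real.rpow_le_one hy h1 hm.le
      have hpow : (0:ℝ) ≤ y ^ n := by positivity
      linarith
    · have : y ^ m ≤ y ^ (n : ℝ) :=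
        Real.rpow_le_rpow_of_exponent_le h1 (Nat.le_ceil m)
      rw [Real.rpow_natCast] at this
      linarith
  have hexp : Real.exp (-y) ≤ 1 := Real.exp_le_one_iff.2 (by linarith)
  have hfac : y ^ n * Real.exp (-y) ≤ (n.factorial : ℝ) := by
    have h1 := Real.pow_div_factorial_le_exp y hy n
    have h2 : (0:ℝ) < n.factorial := by positivity
    rw [div_le_iff₀ h2] at h1
    have h3 : Real.exp y * Real.exp (-y) = 1 := by
      rw [← Real.exp_add]; simp
    calc y ^ n * Real.exp (-y) ≤ Real.exp y * (n.factorial : ℝ) * Real.exp (-y) := by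
          apply mul_le_mul_of_nonneg_right h1 (Real.exp_nonneg _)
      _ = (n.factorial : ℝ) * (Real.exp y * Real.exp (-y)) := by ring
      _ = (n.factorial : ℝ) := by rw [h3, mul_one]
  have hE : (0:ℝ) ≤ Real.exp (-y) := Real.exp_nonneg _
  calc y ^ m * Real.exp (-y) ≤ (y ^ n + 1) * Real.exp (-y) := by
        apply mul_le_mul_of_nonneg_right hyn hE
    _ = y ^ n * Real.exp (-y) + Real.exp (-y) := by ring
    _ ≤ (n.factorial : ℝ) + 1 := add_le_add hfac hexp

private lemma key_pointwise (s ℓ : ℝ) (hs : 0 ≤ s) (hℓ : 0 ≤ ℓ) (hls : 0 < ℓ + s) :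
    ∃ K : ℝ, 1 ≤ K ∧ ∀ x t : ℝ, 0 < x → 0 ≤ t →
      x ^ (2 * ℓ) * Real.exp (-(8 * Real.pi ^ 2) * x ^ 2 * t) ≤
        K * (1 + t) ^ (-(ℓ + s)) * (x ^ (2 * ℓ) + x ^ (-(2 * s))) := by
  obtain ⟨K₀, hK₀, hK⟩ := rpow_mul_exp_neg_le (ℓ + s) hls
  refine ⟨Real.exp 1 * K₀, le_trans (by linarith) (by nlinarith [Real.one_le_exp (le_of_lt one_pos)]), fun x t hx ht => ?_⟩
  have hpi : (1:ℝ) ≤ 8 * Real.pi ^ 2 := by nlinarith [Real.pi_gt_three]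
  have h1t : (0:ℝ) < 1 + t := by linarith
  have hrp : (0:ℝ) < (1 + t) ^ (-(ℓ + s)) := Real.rpow_pos_of_pos h1t _
  have hxl : (0:ℝ) ≤ x ^ (2 * ℓ) := Real.rpow_nonneg hx.le _
  have hxs : (0:ℝ) ≤ x ^ (-(2 * s)) := Real.rpow_nonneg hx.le _
  -- key: (1+t)^(ℓ+s) * LHS ≤ (exp 1 * K₀) * (x^(2ℓ) + x^(-2s))
  have main : (1 + t) ^ (ℓ + s) * (x ^ (2 * ℓ) * Real.exp (-(8 * Real.pi ^ 2) * x ^ 2 * t)) ≤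
      Real.exp 1 * K₀ * (x ^ (2 * ℓ) + x ^ (-(2 * s))) := by
    rcases le_total 1 x with hx1 | hx1
    · -- x ≥ 1 : exp(-8π²x²t) ≤ exp(1) exp(-(1+t))
      have he : Real.exp (-(8 * Real.pi ^ 2) * x ^ 2 * t) ≤ Real.exp 1 * Real.exp (-(1 + t)) := by
        rw [← Real.exp_add]
        apply Real.exp_le_exp.2
        have hx2 : (1:ℝ) ≤ x ^ 2 := by nlinarith
        have h8 : (1:ℝ) ≤ 8 * Real.pi ^ 2 * x ^ 2 := by nlinarith
        nlinarith [mul_nonneg (by linarith : (0:ℝ) ≤ 8 * Real.pi ^ 2 * x ^ 2 - 1) ht]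
      have hy := hK (1 + t) h1t.le
      calc (1 + t) ^ (ℓ + s) * (x ^ (2 * ℓ) * Real.exp (-(8 * Real.pi ^ 2) * x ^ 2 * t))
          ≤ (1 + t) ^ (ℓ + s) * (x ^ (2 * ℓ) * (Real.exp 1 * Real.exp (-(1 + t)))) := by
            apply mul_le_mul_of_nonneg_left _ (Real.rpow_nonneg h1t.le _)
            exact mul_le_mul_of_nonneg_left he hxl
        _ = Real.exp 1 * ((1 + t) ^ (ℓ + s) * Real.exp (-(1 + t))) * x ^ (2 * ℓ) := by ring
        _ ≤ Real.exp 1 * K₀ * x ^ (2 * ℓ) := by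
            apply mul_le_mul_of_nonneg_right _ hxl
            exact mul_le_mul_of_nonneg_left hy (Real.exp_nonneg _)
        _ ≤ Real.exp 1 * K₀ * (x ^ (2 * ℓ) + x ^ (-(2 * s))) := by
            nlinarith [mul_nonneg (mul_nonneg (Real.exp_nonneg 1) (by linarith : (0:ℝ) ≤ K₀)) hxs]
    · -- x ≤ 1 : set y = x²(1+t)
      set y : ℝ := x ^ 2 * (1 + t) with hy_def
      have hy0 : 0 ≤ y := by positivity
      have he : Real.exp (-(8 * Real.pi ^ 2) * x ^ 2 * t) ≤ Real.exp 1 * Real.exp (-y) := by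
        rw [← Real.exp_add]
        apply Real.exp_le_exp.2
        have hx2 : x ^ 2 ≤ 1 := by nlinarith
        nlinarith [mul_nonneg (mul_nonneg (by nlinarith : (0:ℝ) ≤ 8 * Real.pi ^ 2 - 1) (sq_nonneg x)) ht]
      have hy := hK y hy0
      -- x^(2ℓ) * (1+t)^(ℓ+s) = x^(-2s) * y^(ℓ+s)
      have hid : x ^ (2 * ℓ) * (1 + t) ^ (ℓ + s) = x ^ (-(2 * s)) * y ^ (ℓ + s) := by
        rw [hy_def, Real.mul_rpow (sq_nonneg x) h1t.le, ← Real.rpow_natCast x 2,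
          ← Real.rpow_mul hx.le, ← mul_assoc, ← Real.rpow_add hx]
        congr 2
        push_cast
        ring
      calc (1 + t) ^ (ℓ + s) * (x ^ (2 * ℓ) * Real.exp (-(8 * Real.pi ^ 2) * x ^ 2 * t))
          ≤ (1 + t) ^ (ℓ + s) * (x ^ (2 * ℓ) * (Real.exp 1 * Real.exp (-y))) := by
            apply mul_le_mul_of_nonneg_left _ (Real.rpow_nonneg h1t.le _)
            exact mul_le_mul_of_nonneg_left he hxl
        _ = Real.exp 1 * (x ^ (2 * ℓ) * (1 + t) ^ (ℓ + s)) * Real.exp (-y) := by ring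
        _ = Real.exp 1 * (x ^ (-(2 * s)) * (y ^ (ℓ + s) * Real.exp (-y))) := by
            rw [hid]; ring
        _ ≤ Real.exp 1 * (x ^ (-(2 * s)) * K₀) := by
            apply mul_le_mul_of_nonneg_left _ (Real.exp_nonneg _)
            exact mul_le_mul_of_nonneg_left hy hxs
        _ = Real.exp 1 * K₀ * x ^ (-(2 * s)) := by ring
        _ ≤ Real.exp 1 * K₀ * (x ^ (2 * ℓ) + x ^ (-(2 * s))) := by
            nlinarith [mul_nonneg (mul_nonneg (Real.exp_nonneg 1) (by linarith : (0:ℝ) ≤ K₀)) hxl]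
  -- convert: multiply by (1+t)^(-(ℓ+s))
  have hinv : (1 + t) ^ (-(ℓ + s)) * (1 + t) ^ (ℓ + s) = 1 := by
    have h0 : -(ℓ + s) + (ℓ + s) = 0 := by ring
    rw [← Real.rpow_add h1t, h0, Real.rpow_zero]
  calc x ^ (2 * ℓ) * Real.exp (-(8 * Real.pi ^ 2) * x ^ 2 * t)
      = (1 + t) ^ (-(ℓ + s)) * ((1 + t) ^ (ℓ + s) *
          (x ^ (2 * ℓ) * Real.exp (-(8 * Real.pi ^ 2) * x ^ 2 * t))) := by
        rw [← mul_assoc, hinv, one_mul]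
    _ ≤ (1 + t) ^ (-(ℓ + s)) * (Real.exp 1 * K₀ * (x ^ (2 * ℓ) + x ^ (-(2 * s)))) :=
        mul_le_mul_of_nonneg_left main hrp.le
    _ = Real.exp 1 * K₀ * (1 + t) ^ (-(ℓ + s)) * (x ^ (2 * ℓ) + x ^ (-(2 * s))) := by ring

/-- Optimal decay for the heat semigroup: if `‖∇^ℓ u₀‖_{L²}, ‖Λ^{-s} u₀‖_{L²} < ∞` with
`ℓ, s ≥ 0`, `ℓ + s > 0`, then `‖∇^ℓ e^{tΔ}u₀‖_{L²}² ≤ C₀ (1+t)^{-(ℓ+s)}`,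
stated on the Fourier side where `e^{tΔ}` is multiplication by `e^{-4π²|ξ|²t}`. -/
theorem heat_flow_algebraic_decay (u₀ : EuclideanSpace ℝ (Fin 3) → ℂ)
    (hu₀ : MemLp u₀ 2 volume) (s ℓ : ℝ) (hs : 0 ≤ s) (hℓ : 0 ≤ ℓ) (hls : 0 < ℓ + s)
    (hpos : Integrable (fun ξ => ‖ξ‖ ^ (2 * ℓ) * ‖𝓕 u₀ ξ‖ ^ 2))
    (hneg : Integrable (fun ξ => ‖ξ‖ ^ (-(2 * s)) * ‖𝓕 u₀ ξ‖ ^ 2)) :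
    ∃ C₀ : ℝ, 0 < C₀ ∧ ∀ t : ℝ, 0 ≤ t →
      (∫ ξ, ‖ξ‖ ^ (2 * ℓ) *
          ‖Real.exp (-(4 * Real.pi ^ 2) * ‖ξ‖ ^ 2 * t) • 𝓕 u₀ ξ‖ ^ 2) ≤
        C₀ * (1 + t) ^ (-(ℓ + s)) := by
  obtain ⟨K, hK1, hK⟩ := key_pointwise s ℓ hs hℓ hls
  set A : ℝ := ∫ ξ, ‖ξ‖ ^ (2 * ℓ) * ‖𝓕 u₀ ξ‖ ^ 2 with hA
  set B : ℝ := ∫ ξ, ‖ξ‖ ^ (-(2 * s)) * ‖𝓕 u₀ ξ‖ ^ 2 with hB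
  have hA0 : 0 ≤ A := integral_nonneg fun ξ => by positivity
  have hB0 : 0 ≤ B := integral_nonneg fun ξ => by positivity
  refine ⟨K * (A + B) + 1, by nlinarith, fun t ht => ?_⟩
  have h1t : (0:ℝ) < 1 + t := by linarith
  have hrp : (0:ℝ) < (1 + t) ^ (-(ℓ + s)) := Real.rpow_pos_of_pos h1t _
  set c : ℝ := K * (1 + t) ^ (-(ℓ + s)) with hc
  have hc0 : 0 ≤ c := by positivity
  -- the dominating function
  have hg : Integrable (fun ξ : EuclideanSpace ℝ (Fin 3) =>
      c * ((‖ξ‖ ^ (2 * ℓ) + ‖ξ‖ ^ (-(2 * s))) * ‖𝓕 u₀ ξ‖ ^ 2)) := by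
    have : Integrable (fun ξ : EuclideanSpace ℝ (Fin 3) =>
        (‖ξ‖ ^ (2 * ℓ) + ‖ξ‖ ^ (-(2 * s))) * ‖𝓕 u₀ ξ‖ ^ 2) := by
      have := hpos.add hneg
      simpa [add_mul, Pi.add_def] using this
    exact this.const_mul c
  have hbound : ∀ᵐ ξ : EuclideanSpace ℝ (Fin 3), ‖ξ‖ ^ (2 * ℓ) *
      ‖Real.exp (-(4 * Real.pi ^ 2) * ‖ξ‖ ^ 2 * t) • 𝓕 u₀ ξ‖ ^ 2 ≤
      c * ((‖ξ‖ ^ (2 * ℓ) + ‖ξ‖ ^ (-(2 * s))) * ‖𝓕 u₀ ξ‖ ^ 2) := by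
    have hne : ∀ᵐ ξ : EuclideanSpace ℝ (Fin 3), ξ ≠ 0 := by
      have : (volume : Measure (EuclideanSpace ℝ (Fin 3))) {0} = 0 := measure_singleton 0
      filter_upwards [measure_eq_zero_iff_ae_notMem.mp this] with ξ hξ
      simpa using hξ
    filter_upwards [hne] with ξ hξ
    have hx : (0:ℝ) < ‖ξ‖ := norm_pos_iff.2 hξ
    have hnorm : ‖Real.exp (-(4 * Real.pi ^ 2) * ‖ξ‖ ^ 2 * t) • 𝓕 u₀ ξ‖ ^ 2 =
        Real.exp (-(8 * Real.pi ^ 2) * ‖ξ‖ ^ 2 * t) * ‖𝓕 u₀ ξ‖ ^ 2 := by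
      rw [norm_smul, Real.norm_eq_abs, abs_of_pos (Real.exp_pos _), mul_pow, sq,
        ← Real.exp_add]
      ring_nf
    rw [hnorm]
    have := hK ‖ξ‖ t hx ht
    calc ‖ξ‖ ^ (2 * ℓ) * (Real.exp (-(8 * Real.pi ^ 2) * ‖ξ‖ ^ 2 * t) * ‖𝓕 u₀ ξ‖ ^ 2)
        = (‖ξ‖ ^ (2 * ℓ) * Real.exp (-(8 * Real.pi ^ 2) * ‖ξ‖ ^ 2 * t)) * ‖𝓕 u₀ ξ‖ ^ 2 := by
          ring
      _ ≤ (K * (1 + t) ^ (-(ℓ + s)) * (‖ξ‖ ^ (2 * ℓ) + ‖ξ‖ ^ (-(2 * s)))) * ‖𝓕 u₀ ξ‖ ^ 2 := by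
          apply mul_le_mul_of_nonneg_right this (by positivity)
      _ = c * ((‖ξ‖ ^ (2 * ℓ) + ‖ξ‖ ^ (-(2 * s))) * ‖𝓕 u₀ ξ‖ ^ 2) := by rw [hc]; ring
  have hf0 : ∀ᵐ ξ : EuclideanSpace ℝ (Fin 3), 0 ≤ ‖ξ‖ ^ (2 * ℓ) *
      ‖Real.exp (-(4 * Real.pi ^ 2) * ‖ξ‖ ^ 2 * t) • 𝓕 u₀ ξ‖ ^ 2 := by
    filter_upwards with ξ
    positivity
  have hI := integral_mono_of_nonneg hf0 hg hbound
  have hgval : (∫ ξ : EuclideanSpace ℝ (Fin 3),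
      c * ((‖ξ‖ ^ (2 * ℓ) + ‖ξ‖ ^ (-(2 * s))) * ‖𝓕 u₀ ξ‖ ^ 2)) = c * (A + B) := by
    rw [integral_const_mul]
    congr 1
    have : (fun ξ : EuclideanSpace ℝ (Fin 3) =>
        (‖ξ‖ ^ (2 * ℓ) + ‖ξ‖ ^ (-(2 * s))) * ‖𝓕 u₀ ξ‖ ^ 2) =
        fun ξ => ‖ξ‖ ^ (2 * ℓ) * ‖𝓕 u₀ ξ‖ ^ 2 + ‖ξ‖ ^ (-(2 * s)) * ‖𝓕 u₀ ξ‖ ^ 2 := by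
      funext ξ; ring
    rw [this, integral_add hpos hneg]
  rw [hgval] at hI
  calc (∫ ξ, ‖ξ‖ ^ (2 * ℓ) *
          ‖Real.exp (-(4 * Real.pi ^ 2) * ‖ξ‖ ^ 2 * t) • 𝓕 u₀ ξ‖ ^ 2)
      ≤ c * (A + B) := hI
    _ = K * (A + B) * (1 + t) ^ (-(ℓ + s)) := by rw [hc]; ring
    _ ≤ (K * (A + B) + 1) * (1 + t) ^ (-(ℓ + s)) := by nlinarith
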